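/- Assume the Weierstrass decomposition, historical data, and persistent excitation hypotheses, and assume the (n+p) × n stacked matrix col(E, C) has rank n. Suppose there exist matrices Σ_{X_p} ∈ ℝ^{n×n}, Σ_{U_p} ∈ ℝ^{n×m}, Σ_{Y_p} ∈ ℝ^{n×p}, Σ_{Y_f} ∈ ℝ^{n×p} such that X_f = Σ_{X_p}·X_p + Σ_{U_p}·U_p + Σ_{Y_p}·Y_p + Σ_{Y_f}·Y_f and Σ_{X_p} is Schur stable. Then for every trajectory (u, x, y) of the descriptor system and every initial estimate x̂(0) ∈ ℝ^n, the sequence defined recursively by x̂(k+1) = Σ_{X_p}·x̂(k) + Σ_{U_p}·u(k) + Σ_{Y_p}·y(k) + Σ_{Y_f}·y(k+1) satisfies ‖x(k) − x̂(k)‖ → 0 as k → ∞. -/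

import Mathlib

open Matrix

noncomputable section

/-- Data matrix of depth `T` whose `k`-th column is `f (k + off)`. -/
def histMat {ι : Type} (T : ℕ) (f : ℕ → ι → ℝ) (off : ℕ) : Matrix ι (Fin T) ℝ :=
  Matrix.of fun i k => f ((k : ℕ) + off) i

/-- A real square matrix is Schur stable if every complex eigenvalue has modulus `< 1`. -/
def SchurStable {n : ℕ} (M : Matrix (Fin n) (Fin n) ℝ) : Prop :=
  ∀ μ ∈ spectrum ℂ (M.map (fun r : ℝ => (r : ℂ))), ‖μ‖ < 1

/-- View a real matrix as a complex matrix. -/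
def cmap {a b : Type} (M : Matrix a b ℝ) : Matrix a b ℂ := M.map (fun r => (r : ℂ))

lemma mulVec_sum_smul {a b T : Type} [Fintype b] [Fintype T] (M : Matrix a b ℝ)
    (c : T → ℝ) (f : T → b → ℝ) :
    M *ᵥ (∑ t, c t • f t) = ∑ t, c t • (M *ᵥ f t) := by
  funext i
  simp only [Matrix.mulVec, dotProduct, Finset.sum_apply, Pi.smul_apply, smul_eq_mul,
    Finset.mul_sum]
  rw [Finset.sum_comm]
  exact Finset.sum_congr rfl fun t _ => Finset.sum_congr rfl fun j _ => by ring

lemma histMat_mulVec {ι : Type} (T : ℕ) (f : ℕ → ι → ℝ) (off : ℕ) (c : Fin T → ℝ) :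
    histMat T f off *ᵥ c = ∑ t : Fin T, c t • f ((t : ℕ) + off) := by
  funext i
  simp [histMat, Matrix.mulVec, dotProduct, Finset.sum_apply, mul_comm]

lemma rank_full_surj {ι : Type} [Fintype ι] {T : ℕ} (M : Matrix ι (Fin T) ℝ)
    (h : M.rank = Fintype.card ι) (v : ι → ℝ) : ∃ c, M *ᵥ c = v := by
  have hrange : LinearMap.range M.mulVecLin = ⊤ := by
    apply Submodule.eq_top_of_finrank_eq
    rw [show Module.finrank ℝ (LinearMap.range M.mulVecLin) = M.rank from rfl, h,
      Module.finrank_pi]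
  have : v ∈ LinearMap.range M.mulVecLin := by rw [hrange]; trivial
  obtain ⟨c, hc⟩ := this
  exact ⟨c, by simpa [Matrix.mulVecLin_apply] using hc⟩

lemma fast_solve {n2 m : ℕ} (s : ℕ) (R : Matrix (Fin n2) (Fin n2) ℝ)
    (B2 : Matrix (Fin n2) (Fin m) ℝ) (hR : R ^ s = 0)
    (w2 : ℕ → Fin n2 → ℝ) (u : ℕ → Fin m → ℝ)
    (h : ∀ k, R *ᵥ w2 (k + 1) = w2 k + B2 *ᵥ u k) (k : ℕ) :
    w2 k = -(∑ j ∈ Finset.range s, ((R ^ j * B2) *ᵥ u (k + j))) := by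
  have key : ∀ t k, w2 k =
      (R ^ t) *ᵥ w2 (k + t) - ∑ j ∈ Finset.range t, ((R ^ j * B2) *ᵥ u (k + j)) := by
    intro t
    induction t with
    | zero => intro k; simp [Matrix.one_mulVec]
    | succ t ih =>
      intro k
      have h1 := ih k
      have h2 : w2 (k + t) = R *ᵥ w2 (k + t + 1) - B2 *ᵥ u (k + t) := by
        rw [h (k + t)]; abel
      rw [h1, h2]
      rw [Matrix.mulVec_sub, Matrix.mulVec_mulVec, Finset.sum_range_succ]
      rw [← pow_succ, Matrix.mulVec_mulVec]
      simp only [← Nat.add_assoc]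
      module
  have := key s k
  rw [this, hR, Matrix.zero_mulVec]
  abel

section Schur

attribute [local instance] Matrix.linftyOpNormedAddCommGroup Matrix.linftyOpNormedRing
  Matrix.linftyOpNormedAlgebra

lemma cmap_pow {n : ℕ} (M : Matrix (Fin n) (Fin n) ℝ) (k : ℕ) :
    cmap (M ^ k) = (cmap M) ^ k := by
  show Complex.ofRealHom.mapMatrix (M ^ k) = _
  rw [map_pow]; rfl

lemma cmap_nnnorm {a b : Type} [Fintype a] [Fintype b] (M : Matrix a b ℝ) :
    ‖cmap M‖₊ = ‖M‖₊ := by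
  simp [Matrix.linfty_opNNNorm_def, cmap]

lemma schur_norm_pow_tendsto {n : ℕ} (hn : 0 < n) (M : Matrix (Fin n) (Fin n) ℝ)
    (h : SchurStable M) :
    Filter.Tendsto (fun k => ‖M ^ k‖) Filter.atTop (nhds 0) := by
  haveI : Nonempty (Fin n) := ⟨⟨0, hn⟩⟩
  set N := cmap M with hNdef
  have hspec : (spectrum ℂ N).Nonempty := spectrum.nonempty N
  have hρ : spectralRadius ℂ N < 1 := by
    have h1 : ∀ μ ∈ spectrum ℂ N, ‖μ‖₊ < (1 : NNReal) := by
      intro μ hμ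
      have habs : ‖μ‖ < 1 := h μ hμ
      rw [← NNReal.coe_lt_coe]
      push_cast
      exact habs
    have := spectrum.spectralRadius_lt_of_forall_lt_of_nonempty hspec h1
    simpa using this
  have gel := spectrum.pow_nnnorm_pow_one_div_tendsto_nhds_spectralRadius N
  obtain ⟨r, hr1, hr2⟩ := exists_between hρ
  have hrtop : r ≠ ⊤ := (hr2.trans_le le_top).ne
  set r' : NNReal := r.toNNReal with hr'def
  have hrr' : r = (r' : ENNReal) := (ENNReal.coe_toNNReal hrtop).symm
  have hr'1 : (r' : ℝ) < 1 := by
    have : (r' : ENNReal) < 1 := hrr' ▸ hr2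
    exact_mod_cast this
  have hev : ∀ᶠ k : ℕ in Filter.atTop, (‖N ^ k‖₊ : ENNReal) ^ (1 / (k : ℝ)) < r :=
    gel.eventually_lt_const hr1
  have hbound : ∀ᶠ k in Filter.atTop, ‖M ^ k‖ ≤ (r' : ℝ) ^ k := by
    filter_upwards [hev, Filter.eventually_ge_atTop 1] with k hk hk1
    have hk0 : (k : ℝ) ≠ 0 := by
      have : (1:ℝ) ≤ (k:ℝ) := by exact_mod_cast hk1
      linarith
    have heq : (‖N ^ k‖₊ : ENNReal) = ((‖N ^ k‖₊ : ENNReal) ^ (1 / (k : ℝ))) ^ (k : ℝ) := by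
      rw [← ENNReal.rpow_mul, one_div, inv_mul_cancel₀ hk0, ENNReal.rpow_one]
    have h2 : (‖N ^ k‖₊ : ENNReal) ≤ r ^ (k : ℝ) := by
      rw [heq]
      exact ENNReal.rpow_le_rpow hk.le (by positivity)
    rw [hrr', ← ENNReal.coe_rpow_of_nonneg _ (by positivity), ENNReal.coe_le_coe] at h2
    have h3 : ‖N ^ k‖₊ ≤ r' ^ k := by
      rwa [← NNReal.rpow_natCast]
    have h4 : ‖M ^ k‖₊ = ‖N ^ k‖₊ := by rw [hNdef, ← cmap_pow, cmap_nnnorm]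
    calc ‖M ^ k‖ = (‖N ^ k‖₊ : ℝ) := by rw [← h4, coe_nnnorm]
    _ ≤ ((r' ^ k : NNReal) : ℝ) := by exact_mod_cast h3
    _ = (r' : ℝ) ^ k := by push_cast; ring
  exact squeeze_zero' (Filter.Eventually.of_forall fun k => norm_nonneg _) hbound
    (tendsto_pow_atTop_nhds_zero_of_lt_one (by positivity) hr'1)

theorem stmt_1 (n1 n2 s m p T : ℕ) (hs : 1 ≤ s) (hT : 1 ≤ T)
    (E A : Matrix (Fin (n1 + n2)) (Fin (n1 + n2)) ℝ)
    (B : Matrix (Fin (n1 + n2)) (Fin m) ℝ)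
    (C : Matrix (Fin p) (Fin (n1 + n2)) ℝ)
    (S P : Matrix (Fin (n1 + n2)) (Fin (n1 + n2)) ℝ)
    (hS : IsUnit S) (hP : IsUnit P)
    (A1 : Matrix (Fin n1) (Fin n1) ℝ) (R : Matrix (Fin n2) (Fin n2) ℝ)
    (B1 : Matrix (Fin n1) (Fin m) ℝ) (B2 : Matrix (Fin n2) (Fin m) ℝ)
    (C1 : Matrix (Fin p) (Fin n1) ℝ) (C2 : Matrix (Fin p) (Fin n2) ℝ)
    (hR : R ^ s = 0)
    (hE : (S * E * P).submatrix ⇑finSumFinEquiv ⇑finSumFinEquiv = Matrix.fromBlocks 1 0 0 R)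
    (hA : (S * A * P).submatrix ⇑finSumFinEquiv ⇑finSumFinEquiv = Matrix.fromBlocks A1 0 0 1)
    (hB : (S * B).submatrix ⇑finSumFinEquiv id = Matrix.fromRows B1 B2)
    (hC : (C * P).submatrix id ⇑finSumFinEquiv = Matrix.fromCols C1 C2)
    (ud : ℕ → Fin m → ℝ) (z1d : ℕ → Fin n1 → ℝ) (z2d : ℕ → Fin n2 → ℝ)
    (xd : ℕ → Fin (n1 + n2) → ℝ) (yd : ℕ → Fin p → ℝ)
    (hz1 : ∀ k < T, z1d (k + 1) = A1 *ᵥ z1d k + B1 *ᵥ ud k)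
    (hz2 : ∀ k ≤ T, z2d k = -(∑ j ∈ Finset.range s, ((R ^ j * B2) *ᵥ ud (k + j))))
    (hxd : ∀ k ≤ T, xd k = P *ᵥ (fun i => Sum.elim (z1d k) (z2d k) (finSumFinEquiv.symm i)))
    (hyd : ∀ k ≤ T, yd k = C *ᵥ xd k)
    (hPE : (Matrix.of fun (i : Fin n1 ⊕ (Fin (s + 1) × Fin m)) (k : Fin T) =>
        Sum.elim (z1d (k : ℕ))
          (fun jl => ud ((k : ℕ) + (jl.1 : ℕ)) jl.2) i).rank = n1 + (s + 1) * m)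
    (hEC : (Matrix.fromRows E C).rank = n1 + n2)
    (SXp : Matrix (Fin (n1 + n2)) (Fin (n1 + n2)) ℝ)
    (SUp : Matrix (Fin (n1 + n2)) (Fin m) ℝ)
    (SYp SYf : Matrix (Fin (n1 + n2)) (Fin p) ℝ)
    (hSig : histMat T xd 1
      = SXp * histMat T xd 0 + SUp * histMat T ud 0 + SYp * histMat T yd 0 + SYf * histMat T yd 1)
    (hSchur : SchurStable SXp)
    (u : ℕ → Fin m → ℝ) (x : ℕ → Fin (n1 + n2) → ℝ) (y : ℕ → Fin p → ℝ)
    (htraj1 : ∀ k : ℕ, E *ᵥ x (k + 1) = A *ᵥ x k + B *ᵥ u k)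
    (htraj2 : ∀ k : ℕ, y k = C *ᵥ x k)
    (xhat : ℕ → Fin (n1 + n2) → ℝ)
    (hobs : ∀ k : ℕ, xhat (k + 1)
      = SXp *ᵥ xhat k + SUp *ᵥ u k + SYp *ᵥ y k + SYf *ᵥ y (k + 1)) :
    Filter.Tendsto (fun k => ‖x k - xhat k‖) Filter.atTop (nhds 0) := by
  classical
  set e : Fin n1 ⊕ Fin n2 ≃ Fin (n1 + n2) := finSumFinEquiv with he
  -- inverses
  have hPd : IsUnit P.det := (Matrix.isUnit_iff_isUnit_det P).mp hP
  have hPP : P * P⁻¹ = 1 := Matrix.mul_nonsing_inv P hPd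
  have hPP' : P⁻¹ * P = 1 := Matrix.nonsing_inv_mul P hPd
  -- trajectory coordinates
  set z : ℕ → Fin (n1 + n2) → ℝ := fun k => P⁻¹ *ᵥ x k with hzdef
  set w1 : ℕ → Fin n1 → ℝ := fun k i => z k (e (Sum.inl i)) with hw1def
  set w2 : ℕ → Fin n2 → ℝ := fun k j => z k (e (Sum.inr j)) with hw2def
  have hx : ∀ k, x k = P *ᵥ z k := by
    intro k
    rw [hzdef]
    simp only [Matrix.mulVec_mulVec, hPP, Matrix.one_mulVec]
  have hze : ∀ k, z k ∘ ⇑e = Sum.elim (w1 k) (w2 k) := by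
    intro k; funext i; cases i <;> rfl
  have hzsum : ∀ k, (fun i => Sum.elim (w1 k) (w2 k) (e.symm i)) = z k := by
    intro k; funext i
    have : Sum.elim (w1 k) (w2 k) (e.symm i) = (z k ∘ ⇑e) (e.symm i) := by rw [hze]
    rw [this]
    simp [Function.comp]
  -- block equation for trajectory
  have hSEP : S * E * P = (Matrix.fromBlocks 1 0 0 R).submatrix ⇑e.symm ⇑e.symm := by
    rw [← hE]
    rw [Matrix.submatrix_submatrix]
    simp [Equiv.self_comp_symm]
  have hSAP : S * A * P = (Matrix.fromBlocks A1 0 0 (1 : Matrix (Fin n2) (Fin n2) ℝ)).submatrix ⇑e.symm ⇑e.symm := by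
    rw [← hA, Matrix.submatrix_submatrix]
    simp [Equiv.self_comp_symm]
  have hSB : S * B = (Matrix.fromRows B1 B2).submatrix ⇑e.symm id := by
    rw [← hB, Matrix.submatrix_submatrix]
    simp [Equiv.self_comp_symm]
  have hblock : ∀ k,
      Matrix.fromBlocks 1 0 0 R *ᵥ Sum.elim (w1 (k + 1)) (w2 (k + 1))
        = Matrix.fromBlocks A1 0 0 (1 : Matrix (Fin n2) (Fin n2) ℝ) *ᵥ Sum.elim (w1 k) (w2 k)
          + Matrix.fromRows B1 B2 *ᵥ u k := by
    intro k
    have h0 := congrArg (fun v => S *ᵥ v) (htraj1 k)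
    simp only [Matrix.mulVec_add, Matrix.mulVec_mulVec] at h0
    rw [hx (k + 1), hx k] at h0
    simp only [Matrix.mulVec_mulVec] at h0
    rw [hSEP, hSAP, hSB] at h0
    rw [Matrix.submatrix_mulVec_equiv _ _ _ e.symm,
      Matrix.submatrix_mulVec_equiv _ _ _ e.symm] at h0
    have hid : ((Matrix.fromRows B1 B2).submatrix ⇑e.symm id) *ᵥ u k
        = (Matrix.fromRows B1 B2 *ᵥ u k) ∘ ⇑e.symm := rfl
    rw [hid] at h0
    simp only [Equiv.symm_symm] at h0
    funext i
    have h1 := congrFun h0 (e i)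
    simp only [Function.comp_apply, Pi.add_apply, Equiv.symm_apply_apply] at h1
    rw [← hze, ← hze]
    exact h1
  have hslow : ∀ k, w1 (k + 1) = A1 *ᵥ w1 k + B1 *ᵥ u k := by
    intro k
    funext i
    have h1 := congrFun (hblock k) (Sum.inl i)
    simpa [Matrix.fromBlocks_mulVec, Matrix.fromRows_mulVec, Matrix.one_mulVec,
      Matrix.zero_mulVec] using h1
  have hfastrec : ∀ k, R *ᵥ w2 (k + 1) = w2 k + B2 *ᵥ u k := by
    intro k
    funext j
    have h1 := congrFun (hblock k) (Sum.inr j)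
    simpa [Matrix.fromBlocks_mulVec, Matrix.fromRows_mulVec, Matrix.one_mulVec,
      Matrix.zero_mulVec] using h1
  have hfast : ∀ k, w2 k = -(∑ j ∈ Finset.range s, ((R ^ j * B2) *ᵥ u (k + j))) :=
    fast_solve s R B2 hR w2 u hfastrec
  -- key dynamics identity
  have hkey : ∀ k, x (k + 1) = SXp *ᵥ x k + SUp *ᵥ u k + SYp *ᵥ y k + SYf *ᵥ y (k + 1) := by
    intro k
    obtain ⟨c, hc⟩ := rank_full_surj _ (hPE.trans (by simp))
      (Sum.elim (w1 k) (fun jl : Fin (s + 1) × Fin m => u (k + (jl.1 : ℕ)) jl.2))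
    have hcz1 : ∑ t : Fin T, c t • z1d (t : ℕ) = w1 k := by
      funext i
      have h := congrFun hc (Sum.inl i)
      simp only [Matrix.mulVec, dotProduct, Matrix.of_apply, Sum.elim_inl] at h
      simpa [Finset.sum_apply, mul_comm] using h
    have hcu : ∀ j, j ≤ s → ∑ t : Fin T, c t • ud ((t : ℕ) + j) = u (k + j) := by
      intro j hj
      funext l
      have h := congrFun hc (Sum.inr (⟨j, by omega⟩, l))
      simp only [Matrix.mulVec, dotProduct, Matrix.of_apply, Sum.elim_inr] at h
      simpa [Finset.sum_apply, mul_comm] using h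
    have hs1 : ∑ t : Fin T, c t • z1d ((t : ℕ) + 1) = w1 (k + 1) := by
      have e1 : ∀ t : Fin T, z1d ((t : ℕ) + 1) = A1 *ᵥ z1d (t : ℕ) + B1 *ᵥ ud (t : ℕ) :=
        fun t => hz1 _ t.isLt
      calc ∑ t : Fin T, c t • z1d ((t : ℕ) + 1)
          = ∑ t : Fin T, (c t • (A1 *ᵥ z1d (t : ℕ)) + c t • (B1 *ᵥ ud (t : ℕ))) := by
            refine Finset.sum_congr rfl fun t _ => ?_
            rw [e1 t, smul_add]
        _ = A1 *ᵥ (∑ t : Fin T, c t • z1d (t : ℕ)) + B1 *ᵥ (∑ t : Fin T, c t • ud (t : ℕ)) := by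
            rw [Finset.sum_add_distrib, mulVec_sum_smul, mulVec_sum_smul]
        _ = A1 *ᵥ w1 k + B1 *ᵥ u k := by
            rw [hcz1]
            have h00 := hcu 0 (Nat.zero_le s)
            simp only [Nat.add_zero] at h00
            rw [h00]
        _ = w1 (k + 1) := (hslow k).symm
    have hs2 : ∀ d : ℕ, d ≤ 1 → ∑ t : Fin T, c t • z2d ((t : ℕ) + d) = w2 (k + d) := by
      intro d hd
      have e2 : ∀ t : Fin T, z2d ((t : ℕ) + d)
          = -(∑ j ∈ Finset.range s, ((R ^ j * B2) *ᵥ ud ((t : ℕ) + d + j))) :=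
        fun t => hz2 _ (by have := t.isLt; omega)
      calc ∑ t : Fin T, c t • z2d ((t : ℕ) + d)
          = -∑ j ∈ Finset.range s, ((R ^ j * B2) *ᵥ (∑ t : Fin T, c t • ud ((t : ℕ) + d + j))) := by
            simp_rw [e2, smul_neg, Finset.smul_sum, Finset.sum_neg_distrib]
            congr 1
            rw [Finset.sum_comm]
            exact Finset.sum_congr rfl fun j _ => (mulVec_sum_smul _ _ _).symm
        _ = -∑ j ∈ Finset.range s, ((R ^ j * B2) *ᵥ u (k + (d + j))) := by
            congr 1
            refine Finset.sum_congr rfl fun j hj => ?_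
            have hj' := Finset.mem_range.mp hj
            have := hcu (d + j) (by omega)
            simp only [← Nat.add_assoc] at this
            rw [this, Nat.add_assoc]
        _ = w2 (k + d) := by
            rw [hfast (k + d)]
            simp only [← Nat.add_assoc]
    have hsx : ∀ d : ℕ, d ≤ 1 → ∑ t : Fin T, c t • xd ((t : ℕ) + d) = x (k + d) := by
      intro d hd
      have hsum1 : ∑ t : Fin T, c t • z1d ((t : ℕ) + d) = w1 (k + d) := by
        interval_cases d
        · simpa using hcz1
        · exact hs1
      have hsum2 := hs2 d hd
      have exd : ∀ t : Fin T, xd ((t : ℕ) + d)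
          = P *ᵥ (fun i => Sum.elim (z1d ((t : ℕ) + d)) (z2d ((t : ℕ) + d)) (e.symm i)) :=
        fun t => hxd _ (by have := t.isLt; omega)
      calc ∑ t : Fin T, c t • xd ((t : ℕ) + d)
          = ∑ t : Fin T, c t • (P *ᵥ fun i =>
              Sum.elim (z1d ((t : ℕ) + d)) (z2d ((t : ℕ) + d)) (e.symm i)) := by
            exact Finset.sum_congr rfl fun t _ => by rw [exd t]
        _ = P *ᵥ (∑ t : Fin T, c t • fun i =>
              Sum.elim (z1d ((t : ℕ) + d)) (z2d ((t : ℕ) + d)) (e.symm i)) := by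
            rw [mulVec_sum_smul]
        _ = P *ᵥ (fun i => Sum.elim (w1 (k + d)) (w2 (k + d)) (e.symm i)) := by
            have hv : (∑ t : Fin T, c t • fun i =>
                  Sum.elim (z1d ((t : ℕ) + d)) (z2d ((t : ℕ) + d)) (e.symm i))
                = fun i => Sum.elim (w1 (k + d)) (w2 (k + d)) (e.symm i) := by
              funext i
              rw [Finset.sum_apply]
              rcases hsi : e.symm i with a | b
              · simp only [Pi.smul_apply, hsi, Sum.elim_inl, smul_eq_mul]
                have := congrFun hsum1 a
                simpa [Finset.sum_apply] using this
              · simp only [Pi.smul_apply, hsi, Sum.elim_inr, smul_eq_mul]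
                have := congrFun hsum2 b
                simpa [Finset.sum_apply] using this
            rw [hv]
        _ = P *ᵥ z (k + d) := by rw [hzsum]
        _ = x (k + d) := (hx _).symm
    have hsy : ∀ d : ℕ, d ≤ 1 → ∑ t : Fin T, c t • yd ((t : ℕ) + d) = y (k + d) := by
      intro d hd
      have eyd : ∀ t : Fin T, yd ((t : ℕ) + d) = C *ᵥ xd ((t : ℕ) + d) :=
        fun t => hyd _ (by have := t.isLt; omega)
      calc ∑ t : Fin T, c t • yd ((t : ℕ) + d)
          = ∑ t : Fin T, c t • (C *ᵥ xd ((t : ℕ) + d)) :=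
            Finset.sum_congr rfl fun t _ => by rw [eyd t]
        _ = C *ᵥ (∑ t : Fin T, c t • xd ((t : ℕ) + d)) := (mulVec_sum_smul _ _ _).symm
        _ = C *ᵥ x (k + d) := by rw [hsx d hd]
        _ = y (k + d) := (htraj2 _).symm
    have h0 := congrArg (fun M => M *ᵥ c) hSig
    simp only [Matrix.add_mulVec, ← Matrix.mulVec_mulVec] at h0
    rw [histMat_mulVec, histMat_mulVec, histMat_mulVec, histMat_mulVec, histMat_mulVec] at h0
    rw [hsx 1 le_rfl, hsx 0 (by omega), hsy 1 le_rfl, hsy 0 (by omega)] at h0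
    have h00 := hcu 0 (Nat.zero_le s)
    rw [h00] at h0
    simpa using h0
  -- error dynamics
  have herr : ∀ k, x k - xhat k = (SXp ^ k) *ᵥ (x 0 - xhat 0) := by
    intro k
    induction k with
    | zero => simp [Matrix.one_mulVec]
    | succ k ih =>
      have step : x (k + 1) - xhat (k + 1) = SXp *ᵥ (x k - xhat k) := by
        rw [hkey k, hobs k, Matrix.mulVec_sub]
        abel
      rw [step, ih, Matrix.mulVec_mulVec, ← pow_succ']
  -- conclude
  by_cases hn : n1 + n2 = 0
  · have hzero : ∀ k, x k - xhat k = 0 := by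
      intro k
      haveI : IsEmpty (Fin (n1 + n2)) := by rw [hn]; exact Fin.isEmpty
      exact Subsingleton.elim _ _
    simp only [hzero, norm_zero]
    exact tendsto_const_nhds
  · have hn' : 0 < n1 + n2 := Nat.pos_of_ne_zero hn
    have hpow := schur_norm_pow_tendsto hn' SXp hSchur
    have hb : ∀ k, ‖x k - xhat k‖ ≤ ‖SXp ^ k‖ * ‖x 0 - xhat 0‖ := by
      intro k
      rw [herr k]
      exact Matrix.linfty_opNorm_mulVec _ _
    have hlim : Filter.Tendsto (fun k => ‖SXp ^ k‖ * ‖x 0 - xhat 0‖) Filter.atTop (nhds 0) := by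
      have := hpow.mul_const ‖x 0 - xhat 0‖
      simpa using this
    exact squeeze_zero (fun k => norm_nonneg _) hb hlim

end Schur
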